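/- Let Z be a finite additive abelian group, α ∈ Z with additive order m, and x ∈ ⟨α⟩. Then ∑_{d ∣ m, x ∈ ⟨d•α⟩} μ((m/d) / ord(x)) equals 1 if ⟨x⟩ = ⟨α⟩ and equals 0 otherwise, where the sum runs over the positive divisors d of m such that x lies in the cyclic subgroup generated by d•α, μ is the classical Möbius function, and ord(x) is the additive order of x (note ord(d•α) = m/d). -/
import Mathlib

open scoped Classical

/-- Lemma 2.1(ii): for `α ∈ Z` of additive order `m` and `x ∈ ⟨α⟩`,
`∑_{d ∣ m, x ∈ ⟨d•α⟩} μ((m/d) / ord x)` is `1` if `⟨x⟩ = ⟨α⟩` and `0` otherwise. -/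
theorem stmt_2 {Z : Type*} [AddCommGroup Z] [Fintype Z] (α x : Z)
    (hx : x ∈ AddSubgroup.zmultiples α) :
    ∑ d ∈ (addOrderOf α).divisors.filter
        (fun d => x ∈ AddSubgroup.zmultiples (d • α)),
        ArithmeticFunction.moebius ((addOrderOf α / d) / addOrderOf x) =
      if AddSubgroup.zmultiples x = AddSubgroup.zmultiples α then 1 else 0 := by
  set m := addOrderOf α with hmdef
  set r := addOrderOf x with hrdef
  have hm : 0 < m := addOrderOf_pos α
  have hr : 0 < r := addOrderOf_pos x
  have hox : r ∣ m := addOrderOf_dvd_of_mem_zmultiples hx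
  -- membership in ⟨d•α⟩ for a divisor d of m is equivalent to d ∣ m / r
  have hmem : ∀ d, d ∣ m → (x ∈ AddSubgroup.zmultiples (d • α) ↔ d ∣ m / r) := by
    intro d hdm
    have hd0 : 0 < d := Nat.pos_of_dvd_of_pos hdm hm
    have hmd0 : 0 < m / d := Nat.div_pos (Nat.le_of_dvd hm hdm) hd0
    have key : r ∣ m / d ↔ d ∣ m / r := by
      rw [Nat.dvd_div_iff_mul_dvd hdm, Nat.dvd_div_iff_mul_dvd hox, mul_comm]
    constructor
    · intro h
      have h1 : r ∣ addOrderOf (d • α) := addOrderOf_dvd_of_mem_zmultiples h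
      have h2 : addOrderOf (d • α) ∣ m / d := by
        rw [addOrderOf_dvd_iff_nsmul_eq_zero, smul_smul, Nat.div_mul_cancel hdm, hmdef,
          addOrderOf_nsmul_eq_zero]
      exact key.mp (h1.trans h2)
    · intro h
      obtain ⟨k, hk⟩ := AddSubgroup.mem_zmultiples_iff.mp hx
      have h1 : r ∣ m / d := key.mpr h
      have h2 : (m / d) • x = 0 := by
        rw [← addOrderOf_dvd_iff_nsmul_eq_zero]; exact h1
      have h3 : (((m / d : ℕ) : ℤ) * k) • α = 0 := by
        rw [mul_zsmul, hk, natCast_zsmul, h2]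
      have h4 : ((m : ℕ) : ℤ) ∣ ((m / d : ℕ) : ℤ) * k := by
        rw [← addOrderOf_dvd_iff_zsmul_eq_zero] at h3
        exact_mod_cast h3
      have h5 : (d : ℤ) ∣ k := by
        have hmd : ((m : ℕ) : ℤ) = ((m / d : ℕ) : ℤ) * (d : ℤ) := by
          exact_mod_cast (Nat.div_mul_cancel hdm).symm
        rw [hmd] at h4
        exact (mul_dvd_mul_iff_left (by exact_mod_cast hmd0.ne' : ((m / d : ℕ) : ℤ) ≠ 0)).mp h4
      obtain ⟨j, hj⟩ := h5
      refine AddSubgroup.mem_zmultiples_iff.mpr ⟨j, ?_⟩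
      rw [← hk, hj, mul_comm, mul_zsmul, natCast_zsmul]
  -- rewrite the filter and summand
  have hfilt : m.divisors.filter (fun d => x ∈ AddSubgroup.zmultiples (d • α))
      = (m / r).divisors := by
    rw [← Nat.divisors_filter_dvd_of_dvd hm.ne' (Nat.div_dvd_of_dvd hox)]
    exact Finset.filter_congr fun d hd => by
      simpa using hmem d (Nat.mem_divisors.mp hd).1
  have hsummand : ∀ d ∈ (m / r).divisors,
      ArithmeticFunction.moebius ((m / d) / r) = ArithmeticFunction.moebius ((m / r) / d) := by
    intro d hd
    rw [Nat.div_div_eq_div_mul, Nat.div_div_eq_div_mul, mul_comm]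
  rw [hfilt, Finset.sum_congr rfl hsummand, Nat.sum_div_divisors (m / r)
    (fun d => ArithmeticFunction.moebius d)]
  have hkey : ∑ i ∈ (m / r).divisors, ArithmeticFunction.moebius i
      = if m / r = 1 then 1 else 0 := by
    rw [← ArithmeticFunction.coe_mul_zeta_apply, ArithmeticFunction.moebius_mul_coe_zeta,
      ArithmeticFunction.one_apply]
  rw [hkey]
  congr 1
  simp only [eq_iff_iff]
  constructor
  · intro h
    have hrm : r = m := by
      have := Nat.eq_mul_of_div_eq_right hox h
      omega
    refine AddSubgroup.eq_of_le_of_card_ge ((AddSubgroup.zmultiples_le).mpr hx) ?_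
    rw [Nat.card_zmultiples, Nat.card_zmultiples, ← hmdef, ← hrdef, hrm]
  · intro h
    have : r = m := by
      have := congrArg (fun H : AddSubgroup Z => Nat.card H) h
      simp only [Nat.card_zmultiples] at this; exact this
    rw [← this, Nat.div_self hr]
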